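/- Let F be a finite field, m and n positive integers, A ∈ F^{m×m} and B ∈ F^{n×n} matrices whose characteristic polynomials are irreducible over F. Then the following are equivalent: (i) for every nonzero S ∈ F^{m×n}, the F-linear span of {A^i S B^j : i, j ≥ 0} equals F^{m×n}; (ii) gcd(m, n) = 1. -/

import Mathlib

open Matrix Polynomial

section AuxSpan

open Module

/-- Lift of `aeval g` to `AdjoinRoot r` when `aeval g r = 0`,
with a possibly noncommutative target. -/
noncomputable def auxLift {F S : Type*} [Field F] [Ring S] [Algebra F S]
    (r : F[X]) (g : S) (hg : Polynomial.aeval g r = 0) :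
    AdjoinRoot r →+* S :=
  Ideal.Quotient.lift (Ideal.span {r}) ((Polynomial.aeval g).toRingHom) (by
    intro a ha
    obtain ⟨b, rfl⟩ := Ideal.mem_span_singleton.mp ha
    simp [hg])

lemma auxLift_mk {F S : Type*} [Field F] [Ring S] [Algebra F S]
    (r : F[X]) (g : S) (hg : Polynomial.aeval g r = 0) (p : F[X]) :
    auxLift r g hg (AdjoinRoot.mk r p) = Polynomial.aeval g p :=
  Ideal.Quotient.lift_mk _ _ _

lemma auxLift_algebraMap {F S : Type*} [Field F] [Ring S] [Algebra F S]
    (r : F[X]) (g : S) (hg : Polynomial.aeval g r = 0) (c : F) :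
    auxLift r g hg (algebraMap F (AdjoinRoot r) c) = algebraMap F S c := by
  rw [AdjoinRoot.algebraMap_eq]
  show auxLift r g hg (AdjoinRoot.mk r (Polynomial.C c)) = _
  rw [auxLift_mk, Polynomial.aeval_C]

lemma auxLift_root {F S : Type*} [Field F] [Ring S] [Algebra F S]
    (r : F[X]) (g : S) (hg : Polynomial.aeval g r = 0) :
    auxLift r g hg (AdjoinRoot.root r) = g := by
  show auxLift r g hg (AdjoinRoot.mk r Polynomial.X) = g
  rw [auxLift_mk, Polynomial.aeval_X]

/-- `auxLift` commutes with `aeval`. -/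
lemma aeval_auxLift {F S : Type*} [Field F] [Ring S] [Algebra F S]
    (r : F[X]) (g : S) (hg : Polynomial.aeval g r = 0)
    (α : AdjoinRoot r) (t : F[X]) :
    Polynomial.aeval (auxLift r g hg α) t = auxLift r g hg (Polynomial.aeval α t) := by
  rw [Polynomial.aeval_def, Polynomial.aeval_def, Polynomial.hom_eval₂]
  congr 1
  ext c
  simp only [RingHom.comp_apply]
  exact (auxLift_algebraMap r g hg c).symm

/-- If an endomorphism of a f.d. vector space is killed by an irreducible polynomial `r`,
then `natDegree r` divides the dimension. -/
lemma aux_dvd_finrank {F V : Type*} [Field F] [AddCommGroup V] [Module F V]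
    [FiniteDimensional F V] (r : F[X]) (hr : Irreducible r)
    (g : V →ₗ[F] V) (hg : Polynomial.aeval g r = 0) :
    r.natDegree ∣ Module.finrank F V := by
  haveI : Fact (Irreducible r) := ⟨hr⟩
  let E := AdjoinRoot r
  let χ : E →+* (Module.End F V) := auxLift r g hg
  letI : Module E V := Module.compHom V χ
  have hsmul : ∀ (e : E) (v : V), e • v = χ e v := fun _ _ => rfl
  have hχalg : ∀ c : F, χ (algebraMap F E c) = algebraMap F (Module.End F V) c := by
    intro c
    rw [AdjoinRoot.algebraMap_eq]
    show χ (AdjoinRoot.mk r (C c)) = _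
    rw [auxLift_mk, aeval_C]
  haveI : IsScalarTower F E V := ⟨fun c e v => by
    rw [Algebra.smul_def, hsmul, hsmul, _root_.map_mul, hχalg,
      Module.End.mul_apply, Module.algebraMap_end_apply]⟩
  have h1 : Module.finrank F E = r.natDegree := by
    rw [(AdjoinRoot.powerBasis hr.ne_zero).finrank, AdjoinRoot.powerBasis_dim]
  exact ⟨Module.finrank E V, by rw [← h1, Module.finrank_mul_finrank]⟩

/-- If endomorphisms `a`, `b` of nontrivial vector spaces are both killed by the same
irreducible polynomial `r`, there is a nonzero intertwiner `T` with `a ∘ T = T ∘ b`. -/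
lemma aux_exists_intertwiner {F Vm Vn : Type*} [Field F]
    [AddCommGroup Vm] [Module F Vm] [AddCommGroup Vn] [Module F Vn]
    [Nontrivial Vm] [Nontrivial Vn]
    (r : F[X]) (hr : Irreducible r) (a : Vm →ₗ[F] Vm) (b : Vn →ₗ[F] Vn)
    (ha : Polynomial.aeval a r = 0) (hb : Polynomial.aeval b r = 0) :
    ∃ T : Vn →ₗ[F] Vm, T ≠ 0 ∧ a ∘ₗ T = T ∘ₗ b := by
  haveI : Fact (Irreducible r) := ⟨hr⟩
  let E := AdjoinRoot r
  let χm : E →+* (Module.End F Vm) := auxLift r a ha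
  let χn : E →+* (Module.End F Vn) := auxLift r b hb
  letI : Module E Vm := Module.compHom Vm χm
  letI : Module E Vn := Module.compHom Vn χn
  have hsm : ∀ (e : E) (v : Vm), e • v = χm e v := fun _ _ => rfl
  have hsn : ∀ (e : E) (v : Vn), e • v = χn e v := fun _ _ => rfl
  haveI : SMulCommClass E F Vm := ⟨fun e c v => by
    rw [hsm, hsm, (χm e).map_smul]⟩
  haveI : IsScalarTower F E Vn := ⟨fun c e v => by
    rw [Algebra.smul_def, hsn, hsn, _root_.map_mul]
    have : χn (algebraMap F E c) = algebraMap F (Module.End F Vn) c := by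
      rw [AdjoinRoot.algebraMap_eq]
      show χn (AdjoinRoot.mk r (C c)) = _
      rw [auxLift_mk, aeval_C]
    rw [this, Module.End.mul_apply, Module.algebraMap_end_apply]⟩
  haveI : IsScalarTower F E Vm := ⟨fun c e v => by
    rw [Algebra.smul_def, hsm, hsm, _root_.map_mul]
    have : χm (algebraMap F E c) = algebraMap F (Module.End F Vm) c := by
      rw [AdjoinRoot.algebraMap_eq]
      show χm (AdjoinRoot.mk r (C c)) = _
      rw [auxLift_mk, aeval_C]
    rw [this, Module.End.mul_apply, Module.algebraMap_end_apply]⟩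
  obtain ⟨w, hw⟩ := exists_ne (0 : Vm)
  let bas := Basis.ofVectorSpace E Vn
  have hne : Nonempty (Basis.ofVectorSpaceIndex E Vn) := bas.index_nonempty
  obtain ⟨i0⟩ := hne
  let Tlin : Vn →ₗ[E] Vm := bas.constr F (fun _ => w)
  refine ⟨Tlin.restrictScalars F, ?_, ?_⟩
  · intro h
    have : Tlin (bas i0) = 0 := by
      have := congrFun (congrArg (fun f => f.toFun) h) (bas i0)
      simpa using this
    rw [Basis.constr_basis] at this
    exact hw this
  · ext v
    have hroot : ∀ v : Vn, b v = AdjoinRoot.root r • v := by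
      intro v
      rw [hsn]
      have : χn (AdjoinRoot.root r) = b := by
        show χn (AdjoinRoot.mk r X) = b
        rw [auxLift_mk, aeval_X]
      rw [this]
    have hroota : ∀ v : Vm, a v = AdjoinRoot.root r • v := by
      intro v
      rw [hsm]
      have : χm (AdjoinRoot.root r) = a := by
        show χm (AdjoinRoot.mk r X) = a
        rw [auxLift_mk, aeval_X]
      rw [this]
    simp only [LinearMap.comp_apply, LinearMap.coe_restrictScalars]
    rw [hroot, hroota, Tlin.map_smul]

section MulMaps

variable {F : Type*} [Field F] {m n : ℕ}

/-- Left multiplication by a square matrix, as a linear endomorphism of `Matrix (Fin m) (Fin n) F`. -/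
noncomputable def mulLeftLin (A : Matrix (Fin m) (Fin m) F) :
    Matrix (Fin m) (Fin n) F →ₗ[F] Matrix (Fin m) (Fin n) F where
  toFun T := A * T
  map_add' X Y := Matrix.mul_add A X Y
  map_smul' c T := by simp [Matrix.mul_smul]

/-- Right multiplication by a square matrix, as a linear endomorphism. -/
noncomputable def mulRightLin (B : Matrix (Fin n) (Fin n) F) :
    Matrix (Fin m) (Fin n) F →ₗ[F] Matrix (Fin m) (Fin n) F where
  toFun T := T * B
  map_add' X Y := Matrix.add_mul X Y B
  map_smul' c T := by simp [Matrix.smul_mul]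

@[simp] lemma mulLeftLin_apply (A : Matrix (Fin m) (Fin m) F) (T : Matrix (Fin m) (Fin n) F) :
    mulLeftLin A T = A * T := rfl

@[simp] lemma mulRightLin_apply (B : Matrix (Fin n) (Fin n) F) (T : Matrix (Fin m) (Fin n) F) :
    mulRightLin B T = T * B := rfl

lemma mulLeftLin_pow (A : Matrix (Fin m) (Fin m) F) (k : ℕ) (T : Matrix (Fin m) (Fin n) F) :
    ((mulLeftLin A) ^ k) T = A ^ k * T := by
  induction k with
  | zero => simp
  | succ k ih =>
    rw [pow_succ', Module.End.mul_apply, ih, mulLeftLin_apply, ← Matrix.mul_assoc,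
      ← pow_succ']

lemma mulRightLin_pow (B : Matrix (Fin n) (Fin n) F) (k : ℕ) (T : Matrix (Fin m) (Fin n) F) :
    ((mulRightLin B) ^ k) T = T * B ^ k := by
  induction k with
  | zero => simp
  | succ k ih =>
    rw [pow_succ', Module.End.mul_apply, mulRightLin_apply, ih, Matrix.mul_assoc,
      ← pow_succ]

lemma aeval_mulLeftLin (A : Matrix (Fin m) (Fin m) F) (q : F[X]) (T : Matrix (Fin m) (Fin n) F) :
    (Polynomial.aeval (mulLeftLin A) q) T = (Polynomial.aeval A q) * T := by
  induction q using Polynomial.induction_on' with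
  | add p q hp hq => simp only [map_add, LinearMap.add_apply, hp, hq, Matrix.add_mul]
  | monomial k c =>
    simp [aeval_monomial, Module.algebraMap_end_apply, mulLeftLin_pow,
      Matrix.smul_mul, smul_smul, Algebra.algebraMap_eq_smul_one, smul_mul_assoc]

lemma aeval_mulRightLin (B : Matrix (Fin n) (Fin n) F) (q : F[X]) (T : Matrix (Fin m) (Fin n) F) :
    (Polynomial.aeval (mulRightLin B) q) T = T * (Polynomial.aeval B q) := by
  induction q using Polynomial.induction_on' with
  | add p q hp hq => simp only [map_add, LinearMap.add_apply, hp, hq, Matrix.mul_add]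
  | monomial k c =>
    simp [aeval_monomial, Module.algebraMap_end_apply, mulRightLin_pow,
      Matrix.mul_smul, Algebra.algebraMap_eq_smul_one, mul_smul_comm, smul_mul_assoc]

/-- `aeval` commutes with restriction to an invariant submodule. -/
lemma aeval_restrict {F M : Type*} [Field F] [AddCommGroup M] [Module F M]
    (f : M →ₗ[F] M) (W : Submodule F M) (hf : ∀ x ∈ W, f x ∈ W) (q : F[X]) (v : W) :
    ((Polynomial.aeval (f.restrict hf) q v : W) : M) = Polynomial.aeval f q (v : M) := by
  induction q using Polynomial.induction_on' with
  | add p q hp hq => simp [hp, hq]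
  | monomial k c =>
    simp only [aeval_monomial, Module.End.mul_apply, Module.algebraMap_end_apply,
      SetLike.val_smul]
    congr 1
    rw [Module.End.pow_restrict, LinearMap.restrict_coe_apply]

end MulMaps

section Main

variable {F : Type*} [Field F] {m n : ℕ}

lemma reverse_direction (hm : 0 < m) (hn : 0 < n)
    (A : Matrix (Fin m) (Fin m) F) (B : Matrix (Fin n) (Fin n) F)
    (hA : Irreducible A.charpoly) (hB : Irreducible B.charpoly)
    (hcop : Nat.gcd m n = 1) (S : Matrix (Fin m) (Fin n) F) (hS : S ≠ 0) :
    Submodule.span F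
      {M : Matrix (Fin m) (Fin n) F | ∃ i j : ℕ, M = A ^ i * S * B ^ j} = ⊤ := by
  set s : Set (Matrix (Fin m) (Fin n) F) :=
    {M : Matrix (Fin m) (Fin n) F | ∃ i j : ℕ, M = A ^ i * S * B ^ j} with hs
  set V : Submodule F (Matrix (Fin m) (Fin n) F) := Submodule.span F s with hV
  have hSmem : S ∈ V := Submodule.subset_span ⟨0, 0, by simp⟩
  -- invariance under left multiplication by A
  have hfV : ∀ x ∈ V, mulLeftLin A x ∈ V := by
    have hle : V ≤ V.comap (mulLeftLin A) := by
      rw [hV]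
      apply Submodule.span_le.2
      rintro T ⟨i, j, rfl⟩
      refine Submodule.mem_comap.2 (Submodule.subset_span ⟨i + 1, j, ?_⟩)
      simp only [mulLeftLin_apply, pow_succ', Matrix.mul_assoc]
    exact fun x hx => hle hx
  have hgV : ∀ x ∈ V, mulRightLin B x ∈ V := by
    have hle : V ≤ V.comap (mulRightLin B) := by
      rw [hV]
      apply Submodule.span_le.2
      rintro T ⟨i, j, rfl⟩
      refine Submodule.mem_comap.2 (Submodule.subset_span ⟨i, j + 1, ?_⟩)
      rw [mulRightLin_apply, pow_succ, Matrix.mul_assoc]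
    exact fun x hx => hle hx
  -- the restricted endomorphisms are killed by the charpolys
  have hfaeval : Polynomial.aeval ((mulLeftLin A).restrict hfV) A.charpoly = 0 := by
    apply LinearMap.ext
    intro v
    apply Subtype.ext
    rw [aeval_restrict, aeval_mulLeftLin, Matrix.aeval_self_charpoly]
    simp
  have hgaeval : Polynomial.aeval ((mulRightLin B).restrict hgV) B.charpoly = 0 := by
    apply LinearMap.ext
    intro v
    apply Subtype.ext
    rw [aeval_restrict, aeval_mulRightLin, Matrix.aeval_self_charpoly]
    simp
  have hdvdm : m ∣ Module.finrank F V := by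
    have := aux_dvd_finrank A.charpoly hA _ hfaeval
    rwa [Matrix.charpoly_natDegree_eq_dim, Fintype.card_fin] at this
  have hdvdn : n ∣ Module.finrank F V := by
    have := aux_dvd_finrank B.charpoly hB _ hgaeval
    rwa [Matrix.charpoly_natDegree_eq_dim, Fintype.card_fin] at this
  have hdvd : m * n ∣ Module.finrank F V := Nat.Coprime.mul_dvd_of_dvd_of_dvd hcop hdvdm hdvdn
  have hVne : Module.finrank F V ≠ 0 := by
    intro h
    rw [Submodule.finrank_eq_zero] at h
    rw [h] at hSmem
    exact hS (Submodule.mem_bot F |>.1 hSmem)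
  have hfrM : Module.finrank F (Matrix (Fin m) (Fin n) F) = m * n := by
    rw [Module.finrank_matrix]
    simp
  have hle : Module.finrank F V ≤ m * n := hfrM ▸ Submodule.finrank_le V
  have hge : m * n ≤ Module.finrank F V := Nat.le_of_dvd (Nat.pos_of_ne_zero hVne) hdvd
  exact Submodule.eq_top_of_finrank_eq (by omega)

end Main

section Chain

variable {F : Type*} [Field F]

lemma aux_X_pow_sub_X_eq (a : ℕ) (ha : 0 < a) :
    (X ^ a - X : F[X]) = X * (X ^ (a - 1) - 1) := by
  rw [mul_sub, mul_one, ← pow_succ']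
  congr 2
  omega

lemma aux_chain [Fintype F] {d k : ℕ} (hd : 0 < d) (hdvd : d ∣ k) :
    (X ^ (Fintype.card F ^ d) - X : F[X]) ∣ X ^ (Fintype.card F ^ k) - X := by
  have hq : 1 < Fintype.card F := Fintype.one_lt_card
  have hqd : 0 < Fintype.card F ^ d := Nat.pow_pos (by omega)
  have hqk : 0 < Fintype.card F ^ k := Nat.pow_pos (by omega)
  rw [aux_X_pow_sub_X_eq _ hqd, aux_X_pow_sub_X_eq _ hqk]
  apply mul_dvd_mul_left
  -- (q^d - 1) ∣ (q^k - 1)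
  obtain ⟨c, rfl⟩ := hdvd
  have h1 : Fintype.card F ^ d - 1 ∣ Fintype.card F ^ (d * c) - 1 := by
    have := Nat.sub_dvd_pow_sub_pow (Fintype.card F ^ d) 1 c
    rwa [one_pow, ← pow_mul] at this
  obtain ⟨e, he⟩ := h1
  rw [he]
  have := sub_dvd_pow_sub_pow (X ^ (Fintype.card F ^ d - 1) : F[X]) 1 e
  rwa [one_pow, ← pow_mul] at this

/-- Any divisor of `X^(q^(deg p)) - X` of positive degree has a root in `AdjoinRoot p`
for irreducible `p` over a finite field. -/
lemma aux_root [Fintype F] (p : F[X]) (hp : Irreducible p) (r : F[X])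
    (hdvd : r ∣ (X ^ (Fintype.card F ^ p.natDegree) - X)) (hrdeg : r.degree ≠ 0) :
    ∃ α : AdjoinRoot p, Polynomial.aeval α r = 0 := by
  haveI : Fact (Irreducible p) := ⟨hp⟩
  set K := AdjoinRoot p with hK
  haveI : FiniteDimensional F K := Module.Finite.of_basis (AdjoinRoot.powerBasis hp.ne_zero).basis
  haveI : Finite K := Module.finite_of_finite F
  haveI : Fintype K := Fintype.ofFinite K
  have hfr : Module.finrank F K = p.natDegree := by
    rw [(AdjoinRoot.powerBasis hp.ne_zero).finrank, AdjoinRoot.powerBasis_dim]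
  have hcard : Fintype.card K = Fintype.card F ^ p.natDegree := by
    rw [card_eq_pow_finrank (K := F) (V := K), hfr]
  have hq : 1 < Fintype.card F := Fintype.one_lt_card
  have hd0 : p.natDegree ≠ 0 := hp.natDegree_pos.ne'
  -- the big polynomial splits over K
  have hmap : (X ^ (Fintype.card F ^ p.natDegree) - X : F[X]).map (algebraMap F K)
      = X ^ (Fintype.card K) - X := by
    rw [Polynomial.map_sub, Polynomial.map_pow, Polynomial.map_X, hcard]
  have hsplits : Splits ((X ^ (Fintype.card F ^ p.natDegree) - X : F[X]).map (algebraMap F K)) := by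
    rw [hmap]
    rw [Polynomial.splits_iff_card_roots]
    rw [FiniteField.roots_X_pow_card_sub_X K,
      FiniteField.X_pow_card_sub_X_natDegree_eq K Fintype.one_lt_card]
    exact Finset.card_univ
  have hne : (X ^ (Fintype.card F ^ p.natDegree) - X : F[X]) ≠ 0 :=
    FiniteField.X_pow_card_pow_sub_X_ne_zero F hd0 hq
  have hrsplits : Splits (r.map (algebraMap F K)) :=
    hsplits.of_dvd (Polynomial.map_ne_zero hne) (Polynomial.map_dvd _ hdvd)
  obtain ⟨α, hα⟩ := hrsplits.exists_eval_eq_zero (by rwa [Polynomial.degree_map])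
  exact ⟨α, by rwa [Polynomial.aeval_def, Polynomial.eval₂_eq_eval_map]⟩

end Chain

section Factor

variable {F : Type*} [Field F] [Fintype F]

lemma aux_factor {d : ℕ} (hd : 2 ≤ d) :
    ∃ r : F[X], Irreducible r ∧ r ∣ (X ^ (Fintype.card F ^ d) - X) ∧ r.degree ≠ 1 := by
  set q := Fintype.card F with hq
  have hq1 : 1 < q := Fintype.one_lt_card
  set g : F[X] := X ^ (q ^ d) - X with hg
  have hsep : g.Separable := by
    obtain ⟨np, hp, hcard⟩ := FiniteField.card F (ringChar F)
    have hpq : ringChar F ∣ q ^ d := by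
      rw [hq, hcard]
      exact dvd_pow (dvd_pow_self _ np.pos.ne') (by omega)
    exact galois_poly_separable (ringChar F) (q ^ d) hpq
  by_contra hcon
  push_neg at hcon
  have hsp : Splits g := by
    rw [Polynomial.splits_iff_splits]
    refine Or.inr ?_
    intro gg hirr hdvd
    exact hcon gg hirr hdvd
  have hcard : g.roots.card = g.natDegree := Polynomial.splits_iff_card_roots.mp hsp
  have hnat : g.natDegree = q ^ d :=
    FiniteField.X_pow_card_pow_sub_X_natDegree_eq F (by omega) hq1
  have hle : g.roots.card ≤ q := by
    classical
    have hnodup := Polynomial.nodup_roots hsep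
    rw [← Multiset.toFinset_card_of_nodup hnodup]
    exact Finset.card_le_univ _
  have : q < q ^ d := by
    calc q = q ^ 1 := (pow_one q).symm
    _ < q ^ d := Nat.pow_lt_pow_right hq1 (by omega)
  omega

end Factor

section Forward

variable {F : Type*} [Field F] [Fintype F] {m n : ℕ}

lemma forward_direction (hm : 0 < m) (hn : 0 < n)
    (A : Matrix (Fin m) (Fin m) F) (B : Matrix (Fin n) (Fin n) F)
    (hA : Irreducible A.charpoly) (hB : Irreducible B.charpoly)
    (hd : Nat.gcd m n ≠ 1) :
    ∃ S : Matrix (Fin m) (Fin n) F, S ≠ 0 ∧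
      Submodule.span F
        {M : Matrix (Fin m) (Fin n) F | ∃ i j : ℕ, M = A ^ i * S * B ^ j} ≠ ⊤ := by
  have hdpos : 0 < Nat.gcd m n := Nat.gcd_pos_of_pos_left n hm
  have hd2 : 2 ≤ Nat.gcd m n := by omega
  obtain ⟨r, hr, hrdvd, hrdeg1⟩ := aux_factor (F := F) hd2
  have hrdeg0 : r.degree ≠ 0 := by
    have := hr.natDegree_pos
    intro h
    rw [Polynomial.degree_eq_natDegree hr.ne_zero] at h
    exact_mod_cast absurd h (by exact_mod_cast (by omega : (r.natDegree : ℤ) ≠ 0))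
  have hpAdeg : A.charpoly.natDegree = m := by
    rw [Matrix.charpoly_natDegree_eq_dim, Fintype.card_fin]
  have hpBdeg : B.charpoly.natDegree = n := by
    rw [Matrix.charpoly_natDegree_eq_dim, Fintype.card_fin]
  -- roots of r in the two fields
  obtain ⟨α, hα⟩ := aux_root A.charpoly hA r
    (by rw [hpAdeg]
        exact dvd_trans hrdvd (aux_chain hdpos (Nat.gcd_dvd_left m n))) hrdeg0
  obtain ⟨β, hβ⟩ := aux_root B.charpoly hB r
    (by rw [hpBdeg]
        exact dvd_trans hrdvd (aux_chain hdpos (Nat.gcd_dvd_right m n))) hrdeg0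
  -- matrices representing the roots
  set A' : Matrix (Fin m) (Fin m) F :=
    auxLift A.charpoly A (Matrix.aeval_self_charpoly A) α with hA'
  set B' : Matrix (Fin n) (Fin n) F :=
    auxLift B.charpoly B (Matrix.aeval_self_charpoly B) β with hB'
  have ha' : Polynomial.aeval A' r = 0 := by
    rw [hA', aeval_auxLift, hα, map_zero]
  have hb' : Polynomial.aeval B' r = 0 := by
    rw [hB', aeval_auxLift, hβ, map_zero]
  have hcommA : A' * A = A * A' := by
    have h1 : auxLift A.charpoly A (Matrix.aeval_self_charpoly A) α
        * auxLift A.charpoly A (Matrix.aeval_self_charpoly A) (AdjoinRoot.root A.charpoly)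
        = auxLift A.charpoly A (Matrix.aeval_self_charpoly A) (AdjoinRoot.root A.charpoly)
        * auxLift A.charpoly A (Matrix.aeval_self_charpoly A) α := by
      rw [← _root_.map_mul, ← _root_.map_mul, mul_comm]
    rwa [auxLift_root, ← hA'] at h1
  have hcommB : B' * B = B * B' := by
    have h1 : auxLift B.charpoly B (Matrix.aeval_self_charpoly B) β
        * auxLift B.charpoly B (Matrix.aeval_self_charpoly B) (AdjoinRoot.root B.charpoly)
        = auxLift B.charpoly B (Matrix.aeval_self_charpoly B) (AdjoinRoot.root B.charpoly)
        * auxLift B.charpoly B (Matrix.aeval_self_charpoly B) β := by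
      rw [← _root_.map_mul, ← _root_.map_mul, mul_comm]
    rwa [auxLift_root, ← hB'] at h1
  -- intertwiner
  haveI : Nonempty (Fin m) := Fin.pos_iff_nonempty.mp hm
  haveI : Nonempty (Fin n) := Fin.pos_iff_nonempty.mp hn
  have ha : Polynomial.aeval (Matrix.toLinAlgEquiv' A') r = 0 := by
    rw [Polynomial.aeval_algHom_apply, ha', map_zero]
  have hb : Polynomial.aeval (Matrix.toLinAlgEquiv' B') r = 0 := by
    rw [Polynomial.aeval_algHom_apply, hb', map_zero]
  obtain ⟨T, hT0, hTab⟩ := aux_exists_intertwiner r hr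
    (Matrix.toLinAlgEquiv' A') (Matrix.toLinAlgEquiv' B') ha hb
  set S : Matrix (Fin m) (Fin n) F := LinearMap.toMatrix' T with hSdef
  have hS0 : S ≠ 0 := by
    intro h
    refine hT0 (LinearMap.toMatrix'.injective ?_)
    rw [_root_.map_zero, ← hSdef]
    exact h
  have htoLin : ∀ (k : ℕ) (C : Matrix (Fin k) (Fin k) F),
      (Matrix.toLinAlgEquiv' C : (Fin k → F) →ₗ[F] (Fin k → F)) = Matrix.toLin' C := by
    intro k C
    apply LinearMap.ext
    intro v
    rw [Matrix.toLinAlgEquiv'_apply, Matrix.toLin'_apply]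
  have hAS : A' * S = S * B' := by
    have h1 := congrArg (LinearMap.toMatrix' (R := F)) hTab
    rw [LinearMap.toMatrix'_comp, LinearMap.toMatrix'_comp, htoLin, htoLin] at h1
    simp only [LinearMap.toMatrix'_toLin'] at h1
    exact h1
  -- the proper invariant subspace
  refine ⟨S, hS0, ?_⟩
  intro htop
  set W : Submodule F (Matrix (Fin m) (Fin n) F) :=
    LinearMap.ker (mulLeftLin A' - mulRightLin B') with hW
  have hspan : Submodule.span F
      {M : Matrix (Fin m) (Fin n) F | ∃ i j : ℕ, M = A ^ i * S * B ^ j} ≤ W := by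
    apply Submodule.span_le.2
    rintro T' ⟨i, j, rfl⟩
    simp only [SetLike.mem_coe]
    rw [LinearMap.mem_ker, LinearMap.sub_apply, mulLeftLin_apply, mulRightLin_apply,
      sub_eq_zero]
    have hApow : A' * A ^ i = A ^ i * A' := (Commute.pow_right hcommA i).eq
    have hBpow : B' * B ^ j = B ^ j * B' := (Commute.pow_right hcommB j).eq
    have e1 : A' * (A ^ i * S * B ^ j) = (A' * A ^ i) * S * B ^ j := by
      simp only [Matrix.mul_assoc]
    have e2 : (A ^ i * A') * S * B ^ j = A ^ i * (A' * S) * B ^ j := by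
      simp only [Matrix.mul_assoc]
    have e3 : A ^ i * (S * B') * B ^ j = (A ^ i * S) * (B' * B ^ j) := by
      simp only [Matrix.mul_assoc]
    have e4 : (A ^ i * S) * (B ^ j * B') = A ^ i * S * B ^ j * B' := by
      simp only [Matrix.mul_assoc]
    rw [e1, hApow, e2, hAS, e3, hBpow, e4]
  rw [htop, top_le_iff] at hspan
  -- W = ⊤ forces A' to be scalar
  have hall : ∀ T' : Matrix (Fin m) (Fin n) F, A' * T' = T' * B' := by
    intro T'
    have : T' ∈ W := hspan ▸ Submodule.mem_top
    rw [LinearMap.mem_ker, LinearMap.sub_apply, mulLeftLin_apply, mulRightLin_apply,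
      sub_eq_zero] at this
    exact this
  set j0 : Fin n := ⟨0, hn⟩ with hj0
  set c : F := B' j0 j0 with hc
  have hidA : A' = c • (1 : Matrix (Fin m) (Fin m) F) := by
    ext i k
    have h1 := congrFun (congrFun (hall (Matrix.single k j0 1)) i) j0
    have hLHS : (A' * Matrix.single k j0 (1 : F)) i j0 = A' i k := by
      simp [Matrix.mul_apply, Matrix.single]
    have hRHS : (Matrix.single k j0 (1 : F) * B') i j0
        = if i = k then c else 0 := by
      simp only [Matrix.mul_apply, Matrix.single, Matrix.of_apply, ite_mul, one_mul,
        zero_mul, hc]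
      by_cases hik : k = i
      · subst hik
        simp [Finset.sum_ite_eq]
      · simp [hik, Ne.symm hik]
    rw [hLHS, hRHS] at h1
    rw [h1]
    by_cases hik : i = k <;> simp [hik, Matrix.one_apply]
  -- hence r has a root in F, contradiction
  have heval : Polynomial.eval c r = 0 := by
    have h2 : Polynomial.aeval (c • (1 : Matrix (Fin m) (Fin m) F)) r = 0 := hidA ▸ ha'
    rw [← Algebra.algebraMap_eq_smul_one, Polynomial.aeval_algebraMap_apply_eq_algebraMap_eval]
      at h2
    have h3 := congrFun (congrFun h2 ⟨0, hm⟩) ⟨0, hm⟩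
    rw [Matrix.algebraMap_matrix_apply] at h3
    simpa using h3
  have := Polynomial.degree_eq_one_of_irreducible_of_root hr heval
  exact hrdeg1 this

end Forward

end AuxSpan

/-- Over a finite field, if A and B have irreducible characteristic polynomials,
then {A^i S B^j} spans the whole matrix space for every nonzero S
iff gcd(m,n) = 1. -/
theorem span_eq_top_forall_S_iff_gcd_eq_one
    {F : Type*} [Field F] [Fintype F] {m n : ℕ} (hm : 0 < m) (hn : 0 < n)
    (A : Matrix (Fin m) (Fin m) F) (B : Matrix (Fin n) (Fin n) F)
    (hA : Irreducible A.charpoly) (hB : Irreducible B.charpoly) :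
    (∀ S : Matrix (Fin m) (Fin n) F, S ≠ 0 →
        Submodule.span F
          {M : Matrix (Fin m) (Fin n) F | ∃ i j : ℕ, M = A ^ i * S * B ^ j} = ⊤) ↔
      Nat.gcd m n = 1 := by
  constructor
  · intro h
    by_contra hd
    obtain ⟨S, hS0, hne⟩ := forward_direction hm hn A B hA hB hd
    exact hne (h S hS0)
  · intro hcop S hS
    exact reverse_direction hm hn A B hA hB hcop S hS
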